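/- arXiv:0811.0672 — 9 statements merged into one kernel-verified Lean document; each statement's English description precedes it below -/
import Mathlib

section
/- Let X_1, …, X_{N_1} and Y_1, …, Y_{N_2} be vectors in ℝ^d with sample means X̄ = (1/N_1) Σ X_i, Ȳ = (1/N_2) Σ Y_i and sample covariance matrices S_1 = (1/N_1) Σ (X_i − X̄)(X_i − X̄)ᵀ, S_2 = (1/N_2) Σ (Y_i − Ȳ)(Y_i − Ȳ)ᵀ, and assume S_1 and S_2 are positive definite. For μ ∈ ℝ^d and positive definite d×d matrices Σ_1, Σ_2 define l(μ, Σ_1, Σ_2) = −(1/2) Σ_{i=1}^{N_1} (X_i − μ)ᵀ Σ_1⁻¹ (X_i − μ) − (N_1/2) log det Σ_1 − (1/2) Σ_{i=1}^{N_2} (Y_i − μ)ᵀ Σ_2⁻¹ (Y_i − μ) − (N_2/2) log det Σ_2. Then for every fixed μ, the supremum of l(μ, Σ_1, Σ_2) over positive definite Σ_1, Σ_2 equals −(N_1 + N_2)d/2 − (N_1/2) log det S_1 − (N_2/2) log det S_2 − (N_1/2) log(1 + (X̄ − μ)ᵀ S_1⁻¹ (X̄ − μ)) − (N_2/2) log(1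 + (Ȳ − μ)ᵀ S_2⁻¹ (Ȳ − μ)). Hence maximizing l over (μ, Σ_1, Σ_2) is equivalent to minimizing (1 + (X̄ − μ)ᵀ S_1⁻¹ (X̄ − μ))^{N_1/2} (1 + (Ȳ − μ)ᵀ S_2⁻¹ (Ȳ − μ))^{N_2/2} over μ. -/
open Matrix Finset Real

section Aux

lemma quadform_trace' {d : ℕ} (M : Matrix (Fin d) (Fin d) ℝ) (v : Fin d → ℝ) :
    v ⬝ᵥ (M *ᵥ v) = trace (M * vecMulVec v v) := by
  simp only [trace, Matrix.diag_apply, Matrix.mul_apply, vecMulVec_apply, dotProduct, mulVec,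
    dotProduct]
  congr 1; ext i; rw [Finset.mul_sum]; congr 1; ext j; ring

lemma vecMulVec_posSemidef' {d : ℕ} (v : Fin d → ℝ) : (vecMulVec v v).PosSemidef := by
  apply PosSemidef.of_dotProduct_mulVec_nonneg
  · ext i j; simp [vecMulVec_apply, conjTranspose_apply, mul_comm]
  · intro x
    have h : (vecMulVec v v) *ᵥ x = (v ⬝ᵥ x) • v := by
      ext i; simp [mulVec, vecMulVec_apply, dotProduct, Finset.mul_sum, Finset.sum_mul, mul_assoc,
        mul_comm, mul_left_comm]
    rw [h]
    simp only [star_trivial, dotProduct_smul]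
    rw [smul_eq_mul, dotProduct_comm x v]
    exact mul_self_nonneg _

lemma posDef_conj' {d : ℕ} {M B : Matrix (Fin d) (Fin d) ℝ} (hM : M.PosDef)
    (hB : IsUnit B.det) : (B * M * Bᵀ).PosDef := by
  apply PosDef.of_dotProduct_mulVec_pos
  · show (B * M * Bᵀ)ᴴ = B * M * Bᵀ
    simp only [conjTranspose_eq_transpose_of_trivial, transpose_mul, transpose_transpose]
    rw [show Mᵀ = M from hM.1, Matrix.mul_assoc]
  · intro x hx
    have hy : Bᵀ *ᵥ x ≠ 0 := by
      intro h
      apply hx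
      have : Bᵀ⁻¹ *ᵥ (Bᵀ *ᵥ x) = x := by
        rw [mulVec_mulVec, Matrix.nonsing_inv_mul _ (by simpa using hB), one_mulVec]
      rw [← this, h, mulVec_zero]
    have hq := hM.dotProduct_mulVec_pos hy
    have key : x ⬝ᵥ ((B * M * Bᵀ) *ᵥ x) = (Bᵀ *ᵥ x) ⬝ᵥ (M *ᵥ (Bᵀ *ᵥ x)) := by
      rw [← mulVec_mulVec, ← mulVec_mulVec, dotProduct_mulVec x B, ← mulVec_transpose]
    show 0 < star x ⬝ᵥ ((B * M * Bᵀ) *ᵥ x)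
    rw [star_trivial, key]
    simpa [star_trivial] using hq

lemma trace_eq_sum_eigen' {d : ℕ} {P : Matrix (Fin d) (Fin d) ℝ} (hP : P.IsHermitian) :
    P.trace = ∑ i, hP.eigenvalues i := by
  nth_rewrite 1 [hP.spectral_theorem]
  rw [Unitary.conjStarAlgAut_apply, Matrix.trace_mul_cycle]
  have h1 : (star (hP.eigenvectorUnitary : Matrix (Fin d) (Fin d) ℝ)) *
      (hP.eigenvectorUnitary : Matrix (Fin d) (Fin d) ℝ) = 1 :=
    Unitary.coe_star_mul_self _
  rw [h1, Matrix.one_mul, Matrix.trace_diagonal]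
  simp

lemma trace_ge_det' {d : ℕ} {P : Matrix (Fin d) (Fin d) ℝ} (hP : P.PosDef) :
    (d : ℝ) + Real.log P.det ≤ P.trace := by
  have hev : ∀ i, 0 < hP.1.eigenvalues i := hP.eigenvalues_pos
  have hdet : P.det = ∏ i, hP.1.eigenvalues i := by
    have := hP.1.det_eq_prod_eigenvalues
    simpa using this
  have hlog : Real.log P.det = ∑ i, Real.log (hP.1.eigenvalues i) := by
    rw [hdet, Real.log_prod]
    intro i _
    exact (hev i).ne'
  rw [trace_eq_sum_eigen' hP.1, hlog]
  have hb : ∀ i ∈ Finset.univ, 1 + Real.log (hP.1.eigenvalues i) ≤ hP.1.eigenvalues i := by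
    intro i _
    have := Real.log_le_sub_one_of_pos (hev i)
    linarith
  calc (d : ℝ) + ∑ i, Real.log (hP.1.eigenvalues i)
      = ∑ i : Fin d, (1 + Real.log (hP.1.eigenvalues i)) := by
        rw [Finset.sum_add_distrib]; simp
    _ ≤ ∑ i, hP.1.eigenvalues i := Finset.sum_le_sum hb

open scoped MatrixOrder in
lemma key_ineq' {d : ℕ} {A S : Matrix (Fin d) (Fin d) ℝ} (hA : A.PosDef) (hS : S.PosDef) :
    (d : ℝ) + Real.log A.det ≤ (S⁻¹ * A).trace + Real.log S.det := by
  set R := CFC.sqrt A with hR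
  have hRh : Rᵀ = R := by
    have := (CFC.sqrt_nonneg A).posSemidef.1
    simpa [Matrix.IsSymm] using this
  have hRR : R * R = A := CFC.sqrt_mul_sqrt_self A hA.posSemidef.nonneg
  have hRdet : IsUnit R.det := by
    have h2 : R.det * R.det = A.det := by rw [← det_mul, hRR]
    have : R.det ≠ 0 := by
      intro h
      rw [h, mul_zero] at h2
      exact hA.det_pos.ne h2
    exact isUnit_iff_ne_zero.mpr this
  set Q := R * S⁻¹ * Rᵀ with hQ
  have hQpd : Q.PosDef := posDef_conj' hS.inv hRdet
  have htr : Q.trace = (S⁻¹ * A).trace := by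
    rw [hQ, hRh, Matrix.trace_mul_cycle, hRR, Matrix.trace_mul_comm]
  have hdetQ : Q.det = A.det / S.det := by
    rw [hQ, det_mul, det_mul, hRh, det_nonsing_inv, Ring.inverse_eq_inv]
    have h3 : R.det * S.det⁻¹ * R.det = (R.det * R.det) * S.det⁻¹ := by ring
    rw [h3, ← det_mul, hRR, div_eq_mul_inv]
  have := trace_ge_det' hQpd
  rw [htr, hdetQ, Real.log_div hA.det_pos.ne' hS.det_pos.ne'] at this
  linarith

lemma key_eq' {d : ℕ} {A : Matrix (Fin d) (Fin d) ℝ} (hA : A.PosDef) :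
    (A⁻¹ * A).trace = (d : ℝ) := by
  rw [Matrix.nonsing_inv_mul _ (isUnit_iff_ne_zero.mpr hA.det_pos.ne'), Matrix.trace_one]
  simp

lemma sum_centered' {N : ℕ} (a b : Fin N → ℝ) (abar bbar c e : ℝ)
    (ha : ∑ k, a k = N * abar) (hb : ∑ k, b k = N * bbar) :
    ∑ k, (a k - c) * (b k - e)
      = (∑ k, (a k - abar) * (b k - bbar)) + N * ((abar - c) * (bbar - e)) := by
  have expand : ∀ (c e : ℝ), ∑ k, (a k - c) * (b k - e)
      = (∑ k, a k * b k) - e * (∑ k, a k) - c * (∑ k, b k) + N * (c * e) := by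
    intro c e
    have h : ∀ k : Fin N, (a k - c) * (b k - e) = a k * b k - e * a k - c * b k + c * e := by
      intro k; ring
    simp_rw [h]
    rw [Finset.sum_add_distrib, Finset.sum_sub_distrib, Finset.sum_sub_distrib,
      ← Finset.mul_sum, ← Finset.mul_sum, Finset.sum_const, Finset.card_univ,
      Fintype.card_fin, nsmul_eq_mul]
  rw [expand, expand, ha, hb]; ring

lemma outer_decomp' {d N : ℕ} (X : Fin N → Fin d → ℝ)
    (Xbar : Fin d → ℝ) (hXbar : Xbar = (N : ℝ)⁻¹ • ∑ i, X i) (hN : 1 ≤ N) (μ : Fin d → ℝ) :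
    ∑ i, vecMulVec (X i - μ) (X i - μ)
      = (∑ i, vecMulVec (X i - Xbar) (X i - Xbar))
        + (N : ℝ) • vecMulVec (Xbar - μ) (Xbar - μ) := by
  have hNne : (N : ℝ) ≠ 0 := Nat.cast_ne_zero.mpr (by omega)
  ext i j
  simp only [Matrix.add_apply, Matrix.smul_apply, Matrix.sum_apply, vecMulVec_apply,
    Pi.sub_apply, smul_eq_mul]
  exact sum_centered' (fun k => X k i) (fun k => X k j) (Xbar i) (Xbar j) (μ i) (μ j)
    (by rw [hXbar]; simp [Finset.sum_apply]; field_simp)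
    (by rw [hXbar]; simp [Finset.sum_apply]; field_simp)

lemma det_add_outer' {d : ℕ} {S : Matrix (Fin d) (Fin d) ℝ} (hS : S.PosDef) (v : Fin d → ℝ) :
    (S + vecMulVec v v).det = S.det * (1 + v ⬝ᵥ (S⁻¹ *ᵥ v)) := by
  have hU : IsUnit S.det := isUnit_iff_ne_zero.mpr hS.det_pos.ne'
  have h1 : S + vecMulVec v v = S * (1 + S⁻¹ * vecMulVec v v) := by
    rw [Matrix.mul_add, Matrix.mul_one, ← Matrix.mul_assoc,
      Matrix.mul_nonsing_inv _ hU, Matrix.one_mul]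
  have h2 : S⁻¹ * vecMulVec v v = vecMulVec (S⁻¹ *ᵥ v) v := by
    ext i j
    simp [Matrix.mul_apply, vecMulVec_apply, mulVec, dotProduct, Finset.sum_mul, mul_assoc]
  rw [h1, det_mul, h2, vecMulVec_eq (Fin 1), Matrix.det_one_add_replicateCol_mul_replicateRow]

lemma one_sample_sum' {d N : ℕ} (hN : 1 ≤ N) (X : Fin N → Fin d → ℝ) {Xbar : Fin d → ℝ}
    (hXbar : Xbar = (N : ℝ)⁻¹ • ∑ i, X i) {S : Matrix (Fin d) (Fin d) ℝ}
    (hSdef : S = (N : ℝ)⁻¹ • ∑ i, vecMulVec (X i - Xbar) (X i - Xbar))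
    (μ : Fin d → ℝ) (M : Matrix (Fin d) (Fin d) ℝ) :
    ∑ i, (X i - μ) ⬝ᵥ (M *ᵥ (X i - μ))
      = (N : ℝ) * (M * (S + vecMulVec (Xbar - μ) (Xbar - μ))).trace := by
  have hNne : (N : ℝ) ≠ 0 := Nat.cast_ne_zero.mpr (by omega)
  have hsum : ∑ i, vecMulVec (X i - Xbar) (X i - Xbar) = (N : ℝ) • S := by
    rw [hSdef, smul_smul, mul_inv_cancel₀ hNne, one_smul]
  calc ∑ i, (X i - μ) ⬝ᵥ (M *ᵥ (X i - μ))
      = ∑ i, (M * vecMulVec (X i - μ) (X i - μ)).trace := by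
        exact Finset.sum_congr rfl fun i _ => quadform_trace' M (X i - μ)
    _ = (M * ∑ i, vecMulVec (X i - μ) (X i - μ)).trace := by
        rw [Finset.mul_sum, trace_sum]
    _ = (M * ((N : ℝ) • (S + vecMulVec (Xbar - μ) (Xbar - μ)))).trace := by
        rw [outer_decomp' X Xbar hXbar hN μ, hsum, smul_add]
    _ = (N : ℝ) * (M * (S + vecMulVec (Xbar - μ) (Xbar - μ))).trace := by
        rw [Matrix.mul_smul, trace_smul, smul_eq_mul]

end Aux

theorem stmt2 (d N₁ N₂ : ℕ) (hN₁ : 1 ≤ N₁) (hN₂ : 1 ≤ N₂)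
    (X : Fin N₁ → Fin d → ℝ) (Y : Fin N₂ → Fin d → ℝ) :
    let Xbar : Fin d → ℝ := (N₁ : ℝ)⁻¹ • ∑ i, X i
    let Ybar : Fin d → ℝ := (N₂ : ℝ)⁻¹ • ∑ i, Y i
    let S₁ : Matrix (Fin d) (Fin d) ℝ :=
      (N₁ : ℝ)⁻¹ • ∑ i, vecMulVec (X i - Xbar) (X i - Xbar)
    let S₂ : Matrix (Fin d) (Fin d) ℝ :=
      (N₂ : ℝ)⁻¹ • ∑ i, vecMulVec (Y i - Ybar) (Y i - Ybar)
    let l : (Fin d → ℝ) → Matrix (Fin d) (Fin d) ℝ → Matrix (Fin d) (Fin d) ℝ → ℝ :=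
      fun μ Sg₁ Sg₂ =>
        -(1/2) * ∑ i, (X i - μ) ⬝ᵥ (Sg₁⁻¹ *ᵥ (X i - μ)) - (N₁/2 : ℝ) * Real.log Sg₁.det
        - (1/2) * ∑ i, (Y i - μ) ⬝ᵥ (Sg₂⁻¹ *ᵥ (Y i - μ)) - (N₂/2 : ℝ) * Real.log Sg₂.det
    let Mx : (Fin d → ℝ) → ℝ := fun μ => (Xbar - μ) ⬝ᵥ (S₁⁻¹ *ᵥ (Xbar - μ))
    let My : (Fin d → ℝ) → ℝ := fun μ => (Ybar - μ) ⬝ᵥ (S₂⁻¹ *ᵥ (Ybar - μ))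
    let profile : (Fin d → ℝ) → ℝ := fun μ =>
      -(((N₁ : ℝ) + N₂) * d) / 2 - (N₁/2 : ℝ) * Real.log S₁.det - (N₂/2 : ℝ) * Real.log S₂.det
        - (N₁/2 : ℝ) * Real.log (1 + Mx μ) - (N₂/2 : ℝ) * Real.log (1 + My μ)
    let prod : (Fin d → ℝ) → ℝ := fun μ =>
      (1 + Mx μ) ^ ((N₁ : ℝ)/2) * (1 + My μ) ^ ((N₂ : ℝ)/2)
    S₁.PosDef → S₂.PosDef →
    ((∀ μ : Fin d → ℝ,
        sSup {x : ℝ | ∃ Sg₁ Sg₂ : Matrix (Fin d) (Fin d) ℝ,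
          Sg₁.PosDef ∧ Sg₂.PosDef ∧ x = l μ Sg₁ Sg₂} = profile μ) ∧
     (∀ μstar : Fin d → ℝ,
        (∀ μ : Fin d → ℝ, profile μ ≤ profile μstar) ↔
        (∀ μ : Fin d → ℝ, prod μstar ≤ prod μ))) := by
  intro Xbar Ybar S₁ S₂ l Mx My profile prod hS₁ hS₂
  have hMx : ∀ μ, 0 ≤ Mx μ := fun μ => by
    have h := hS₁.inv.posSemidef.dotProduct_mulVec_nonneg (Xbar - μ)
    show (0:ℝ) ≤ (Xbar - μ) ⬝ᵥ (S₁⁻¹ *ᵥ (Xbar - μ))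
    simpa using h
  have hMy : ∀ μ, 0 ≤ My μ := fun μ => by
    have h := hS₂.inv.posSemidef.dotProduct_mulVec_nonneg (Ybar - μ)
    show (0:ℝ) ≤ (Ybar - μ) ⬝ᵥ (S₂⁻¹ *ᵥ (Ybar - μ))
    simpa using h
  have h1Mx : ∀ μ, (0:ℝ) < 1 + Mx μ := fun μ => by linarith [hMx μ]
  have h1My : ∀ μ, (0:ℝ) < 1 + My μ := fun μ => by linarith [hMy μ]
  have hN₁0 : (0:ℝ) ≤ (N₁:ℝ)/2 := by positivity
  have hN₂0 : (0:ℝ) ≤ (N₂:ℝ)/2 := by positivity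
  have hA₁pd : ∀ μ : Fin d → ℝ, (S₁ + vecMulVec (Xbar - μ) (Xbar - μ)).PosDef :=
    fun μ => hS₁.add_posSemidef (vecMulVec_posSemidef' _)
  have hA₂pd : ∀ μ : Fin d → ℝ, (S₂ + vecMulVec (Ybar - μ) (Ybar - μ)).PosDef :=
    fun μ => hS₂.add_posSemidef (vecMulVec_posSemidef' _)
  have hlogA₁ : ∀ μ : Fin d → ℝ, Real.log (S₁ + vecMulVec (Xbar - μ) (Xbar - μ)).det
      = Real.log S₁.det + Real.log (1 + Mx μ) := fun μ => by
    rw [det_add_outer' hS₁, Real.log_mul hS₁.det_pos.ne' (h1Mx μ).ne']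
  have hlogA₂ : ∀ μ : Fin d → ℝ, Real.log (S₂ + vecMulVec (Ybar - μ) (Ybar - μ)).det
      = Real.log S₂.det + Real.log (1 + My μ) := fun μ => by
    rw [det_add_outer' hS₂, Real.log_mul hS₂.det_pos.ne' (h1My μ).ne']
  have hsum₁ : ∀ (μ : Fin d → ℝ) (M : Matrix (Fin d) (Fin d) ℝ),
      ∑ i, (X i - μ) ⬝ᵥ (M *ᵥ (X i - μ))
        = (N₁ : ℝ) * (M * (S₁ + vecMulVec (Xbar - μ) (Xbar - μ))).trace :=
    fun μ M => one_sample_sum' hN₁ X rfl rfl μ M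
  have hsum₂ : ∀ (μ : Fin d → ℝ) (M : Matrix (Fin d) (Fin d) ℝ),
      ∑ i, (Y i - μ) ⬝ᵥ (M *ᵥ (Y i - μ))
        = (N₂ : ℝ) * (M * (S₂ + vecMulVec (Ybar - μ) (Ybar - μ))).trace :=
    fun μ M => one_sample_sum' hN₂ Y rfl rfl μ M
  constructor
  · intro μ
    have hl : ∀ Sg₁ Sg₂ : Matrix (Fin d) (Fin d) ℝ,
        l μ Sg₁ Sg₂
          = -(N₁/2 : ℝ) * ((Sg₁⁻¹ * (S₁ + vecMulVec (Xbar - μ) (Xbar - μ))).trace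
              + Real.log Sg₁.det)
            - (N₂/2 : ℝ) * ((Sg₂⁻¹ * (S₂ + vecMulVec (Ybar - μ) (Ybar - μ))).trace
              + Real.log Sg₂.det) := by
      intro Sg₁ Sg₂
      show -(1/2) * ∑ i, (X i - μ) ⬝ᵥ (Sg₁⁻¹ *ᵥ (X i - μ)) - (N₁/2 : ℝ) * Real.log Sg₁.det
        - (1/2) * ∑ i, (Y i - μ) ⬝ᵥ (Sg₂⁻¹ *ᵥ (Y i - μ)) - (N₂/2 : ℝ) * Real.log Sg₂.det = _
      rw [hsum₁ μ Sg₁⁻¹, hsum₂ μ Sg₂⁻¹]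
      ring
    have hprof : profile μ
        = -(N₁/2 : ℝ) * ((d : ℝ) + Real.log (S₁ + vecMulVec (Xbar - μ) (Xbar - μ)).det)
          - (N₂/2 : ℝ) * ((d : ℝ) + Real.log (S₂ + vecMulVec (Ybar - μ) (Ybar - μ)).det) := by
      show -(((N₁ : ℝ) + N₂) * d) / 2 - (N₁/2 : ℝ) * Real.log S₁.det
          - (N₂/2 : ℝ) * Real.log S₂.det - (N₁/2 : ℝ) * Real.log (1 + Mx μ)
          - (N₂/2 : ℝ) * Real.log (1 + My μ) = _
      rw [hlogA₁ μ, hlogA₂ μ]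
      ring
    apply IsGreatest.csSup_eq
    constructor
    · refine ⟨S₁ + vecMulVec (Xbar - μ) (Xbar - μ), S₂ + vecMulVec (Ybar - μ) (Ybar - μ),
        hA₁pd μ, hA₂pd μ, ?_⟩
      rw [hprof, hl, key_eq' (hA₁pd μ), key_eq' (hA₂pd μ)]
    · rintro x ⟨Sg₁, Sg₂, hpd₁, hpd₂, rfl⟩
      rw [hl Sg₁ Sg₂, hprof]
      have k₁ := key_ineq' (hA₁pd μ) hpd₁
      have k₂ := key_ineq' (hA₂pd μ) hpd₂
      nlinarith [mul_le_mul_of_nonneg_left k₁ hN₁0, mul_le_mul_of_nonneg_left k₂ hN₂0]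
  · intro μstar
    have hprodpos : ∀ μ, 0 < prod μ := fun μ =>
      mul_pos (Real.rpow_pos_of_pos (h1Mx μ) _) (Real.rpow_pos_of_pos (h1My μ) _)
    have hlogp : ∀ μ, Real.log (prod μ)
        = ((N₁:ℝ)/2) * Real.log (1 + Mx μ) + ((N₂:ℝ)/2) * Real.log (1 + My μ) := fun μ => by
      show Real.log ((1 + Mx μ) ^ ((N₁ : ℝ)/2) * (1 + My μ) ^ ((N₂ : ℝ)/2)) = _
      rw [Real.log_mul (Real.rpow_pos_of_pos (h1Mx μ) _).ne'
        (Real.rpow_pos_of_pos (h1My μ) _).ne',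
        Real.log_rpow (h1Mx μ), Real.log_rpow (h1My μ)]
    have hkey : ∀ μ ν : Fin d → ℝ, profile μ ≤ profile ν ↔ prod ν ≤ prod μ := by
      intro μ ν
      rw [← Real.log_le_log_iff (hprodpos ν) (hprodpos μ)]
      have e1 := hlogp μ
      have e2 := hlogp ν
      show -(((N₁ : ℝ) + N₂) * d) / 2 - (N₁/2 : ℝ) * Real.log S₁.det
          - (N₂/2 : ℝ) * Real.log S₂.det - (N₁/2 : ℝ) * Real.log (1 + Mx μ)
          - (N₂/2 : ℝ) * Real.log (1 + My μ)
        ≤ -(((N₁ : ℝ) + N₂) * d) / 2 - (N₁/2 : ℝ) * Real.log S₁.det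
          - (N₂/2 : ℝ) * Real.log S₂.det - (N₁/2 : ℝ) * Real.log (1 + Mx ν)
          - (N₂/2 : ℝ) * Real.log (1 + My ν)
        ↔ Real.log (prod ν) ≤ Real.log (prod μ)
      constructor <;> intro h <;> linarith
    constructor
    · intro h μ; exact (hkey μ μstar).mp (h μ)
    · intro h μ; exact (hkey μ μstar).mpr (h μ)
end

section
/- Let μ̂ ∈ ℝ^d minimize the Behrens–Fisher objective F(μ) = (N_1/2) log(1 + M_X(μ)) + (N_2/2) log(1 + M_Y(μ)) over μ ∈ ℝ^d. Then μ̂ also minimizes M_Y(μ) over the set {μ ∈ ℝ^d : M_X(μ) ≤ M_X(μ̂)}; that is, μ̂ solves the Ellipsoidal Mean Estimation Problem with respect to X at level M_X(μ̂). -/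
open Matrix Real

theorem stmt3 (d : ℕ) (hd : 1 ≤ d)
    (S₁ S₂ : Matrix (Fin d) (Fin d) ℝ) (hS₁ : S₁.PosDef) (hS₂ : S₂.PosDef)
    (Xbar Ybar : Fin d → ℝ) (N₁ N₂ : ℝ) (hN₁ : 0 < N₁) (hN₂ : 0 < N₂)
    (Mx My F : (Fin d → ℝ) → ℝ)
    (hMx : Mx = fun μ => (Xbar - μ) ⬝ᵥ (S₁⁻¹ *ᵥ (Xbar - μ)))
    (hMy : My = fun μ => (Ybar - μ) ⬝ᵥ (S₂⁻¹ *ᵥ (Ybar - μ)))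
    (hF : F = fun μ => (N₁/2) * Real.log (1 + Mx μ) + (N₂/2) * Real.log (1 + My μ))
    (μhat : Fin d → ℝ) (hmin : ∀ μ : Fin d → ℝ, F μhat ≤ F μ) :
    ∀ μ : Fin d → ℝ, Mx μ ≤ Mx μhat → My μhat ≤ My μ := by
  have hMxnn : ∀ μ, 0 ≤ Mx μ := by
    intro μ
    have := hS₁.inv.posSemidef.re_dotProduct_nonneg (Xbar - μ)
    simpa [hMx] using this
  have hMynn : ∀ μ, 0 ≤ My μ := by
    intro μ
    have := hS₂.inv.posSemidef.re_dotProduct_nonneg (Ybar - μ)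
    simpa [hMy] using this
  intro μ hx
  by_contra h
  push_neg at h
  have hlt : F μ < F μhat := by
    rw [hF]
    have h1 : Real.log (1 + Mx μ) ≤ Real.log (1 + Mx μhat) :=
      Real.log_le_log (by linarith [hMxnn μ]) (by linarith)
    have h2 : Real.log (1 + My μ) < Real.log (1 + My μhat) :=
      Real.log_lt_log (by linarith [hMynn μ]) (by linarith)
    have := mul_le_mul_of_nonneg_left h1 (by linarith : (0:ℝ) ≤ N₁/2)
    have := mul_lt_mul_of_pos_left h2 (by linarith : (0:ℝ) < N₂/2)
    dsimp only
    linarith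
  exact absurd (hmin μ) (not_le.mpr hlt)
end

section
/- Define h_X : [0, ∞) → ℝ by h_X(v) = inf { M_Y(μ) : μ ∈ ℝ^d, M_X(μ) ≤ v }. Then h_X is convex on [0, ∞) and antitone (nonincreasing) on [0, ∞). -/
open Matrix Real

private lemma quad_symm {d : ℕ} {A : Matrix (Fin d) (Fin d) ℝ} (hA : A.IsHermitian)
    (x y : Fin d → ℝ) : x ⬝ᵥ (A *ᵥ y) = y ⬝ᵥ (A *ᵥ x) := by
  have hAt : Aᵀ = A := by
    have := hA.eq
    exact (Matrix.conjTranspose_eq_transpose_of_trivial A).symm.trans this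
  rw [Matrix.dotProduct_mulVec, ← Matrix.mulVec_transpose, hAt, dotProduct_comm]

private lemma quad_convex {d : ℕ} {A : Matrix (Fin d) (Fin d) ℝ} (hA : A.PosSemidef)
    (x y : Fin d → ℝ) {a b : ℝ} (ha : 0 ≤ a) (hb : 0 ≤ b) (hab : a + b = 1) :
    (a • x + b • y) ⬝ᵥ (A *ᵥ (a • x + b • y)) ≤
      a * (x ⬝ᵥ (A *ᵥ x)) + b * (y ⬝ᵥ (A *ᵥ y)) := by
  have hxy := quad_symm hA.1 x y
  have hnn : 0 ≤ (x - y) ⬝ᵥ (A *ᵥ (x - y)) := by simpa using hA.dotProduct_mulVec_nonneg (x - y)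
  have hexp : (x - y) ⬝ᵥ (A *ᵥ (x - y)) =
      x ⬝ᵥ (A *ᵥ x) - 2 * (x ⬝ᵥ (A *ᵥ y)) + y ⬝ᵥ (A *ᵥ y) := by
    simp [Matrix.mulVec_sub, sub_dotProduct, dotProduct_sub, hxy]
    ring
  have hcomb : (a • x + b • y) ⬝ᵥ (A *ᵥ (a • x + b • y)) =
      a * a * (x ⬝ᵥ (A *ᵥ x)) + 2 * (a * b) * (x ⬝ᵥ (A *ᵥ y)) + b * b * (y ⬝ᵥ (A *ᵥ y)) := by
    simp [Matrix.mulVec_add, add_dotProduct, dotProduct_add,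
      Matrix.mulVec_smul, smul_dotProduct, dotProduct_smul,
      smul_eq_mul, hxy]
    ring
  have h3 : 0 ≤ x ⬝ᵥ (A *ᵥ x) - 2 * (x ⬝ᵥ (A *ᵥ y)) + y ⬝ᵥ (A *ᵥ y) := hexp ▸ hnn
  have hb' : b = 1 - a := by linarith
  subst hb'
  rw [hcomb]
  nlinarith [mul_nonneg (mul_nonneg ha hb) h3]

theorem stmt5 (d : ℕ) (hd : 1 ≤ d)
    (S₁ S₂ : Matrix (Fin d) (Fin d) ℝ) (hS₁ : S₁.PosDef) (hS₂ : S₂.PosDef)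
    (Xbar Ybar : Fin d → ℝ)
    (Mx My : (Fin d → ℝ) → ℝ)
    (hMx : Mx = fun μ => (Xbar - μ) ⬝ᵥ (S₁⁻¹ *ᵥ (Xbar - μ)))
    (hMy : My = fun μ => (Ybar - μ) ⬝ᵥ (S₂⁻¹ *ᵥ (Ybar - μ)))
    (hX : ℝ → ℝ)
    (hhX : hX = fun v => sInf {t : ℝ | ∃ μ : Fin d → ℝ, Mx μ ≤ v ∧ t = My μ}) :
    ConvexOn ℝ (Set.Ici (0 : ℝ)) hX ∧ AntitoneOn hX (Set.Ici (0 : ℝ)) := by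
  have hS₁i : (S₁⁻¹).PosSemidef := hS₁.inv.posSemidef
  have hS₂i : (S₂⁻¹).PosSemidef := hS₂.inv.posSemidef
  set S : ℝ → Set ℝ := fun v => {t : ℝ | ∃ μ : Fin d → ℝ, Mx μ ≤ v ∧ t = My μ} with hS
  have hMx0 : Mx Xbar = 0 := by simp [hMx]
  have hne : ∀ v : ℝ, 0 ≤ v → (S v).Nonempty := by
    intro v hv
    exact ⟨My Xbar, Xbar, by rw [hMx0]; exact hv, rfl⟩
  have hMynn : ∀ μ, 0 ≤ My μ := by
    intro μ; rw [hMy]; simpa using hS₂i.dotProduct_mulVec_nonneg (Ybar - μ)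
  have hbdd : ∀ v : ℝ, BddBelow (S v) := by
    intro v
    exact ⟨0, fun t ht => by obtain ⟨μ, _, rfl⟩ := ht; exact hMynn μ⟩
  constructor
  · refine ⟨convex_Ici 0, ?_⟩
    intro v₁ hv₁ v₂ hv₂ a b ha hb hab
    rw [hhX]
    simp only
    refine le_of_forall_pos_le_add ?_
    intro ε hε
    obtain ⟨t₁, ht₁, ht₁'⟩ := Real.lt_sInf_add_pos (hne v₁ hv₁) hε
    obtain ⟨t₂, ht₂, ht₂'⟩ := Real.lt_sInf_add_pos (hne v₂ hv₂) hε
    obtain ⟨μ₁, hμ₁, rfl⟩ := ht₁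
    obtain ⟨μ₂, hμ₂, rfl⟩ := ht₂
    have hkey : ∀ (c : Fin d → ℝ) (A : Matrix (Fin d) (Fin d) ℝ), A.PosSemidef →
        (c - (a • μ₁ + b • μ₂)) ⬝ᵥ (A *ᵥ (c - (a • μ₁ + b • μ₂))) ≤
          a * ((c - μ₁) ⬝ᵥ (A *ᵥ (c - μ₁))) + b * ((c - μ₂) ⬝ᵥ (A *ᵥ (c - μ₂))) := by
      intro c A hA
      have heq : c - (a • μ₁ + b • μ₂) = a • (c - μ₁) + b • (c - μ₂) := by
        ext i
        simp only [Pi.add_apply, Pi.sub_apply, Pi.smul_apply, smul_eq_mul]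
        linear_combination (-(c i)) * hab
      rw [heq]
      exact quad_convex hA (c - μ₁) (c - μ₂) ha hb hab
    have hMxc : Mx (a • μ₁ + b • μ₂) ≤ a * v₁ + b * v₂ := by
      rw [hMx]
      refine (hkey Xbar S₁⁻¹ hS₁i).trans ?_
      rw [hMx] at hμ₁ hμ₂
      have := mul_le_mul_of_nonneg_left hμ₁ ha
      have := mul_le_mul_of_nonneg_left hμ₂ hb
      linarith
    have hMyc : My (a • μ₁ + b • μ₂) ≤ a * My μ₁ + b * My μ₂ := by
      rw [hMy]
      simpa using hkey Ybar S₂⁻¹ hS₂i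
    have hmem : My (a • μ₁ + b • μ₂) ∈ S (a * v₁ + b * v₂) :=
      ⟨a • μ₁ + b • μ₂, hMxc, rfl⟩
    have h1 : sInf (S (a * v₁ + b * v₂)) ≤ My (a • μ₁ + b • μ₂) :=
      csInf_le (hbdd _) hmem
    calc sInf (S (a * v₁ + b * v₂)) ≤ a * My μ₁ + b * My μ₂ := h1.trans hMyc
      _ ≤ a * (sInf (S v₁) + ε) + b * (sInf (S v₂) + ε) := by
          have := mul_le_mul_of_nonneg_left ht₁'.le ha
          have := mul_le_mul_of_nonneg_left ht₂'.le hb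
          linarith
      _ = a • sInf (S v₁) + b • sInf (S v₂) + ε := by
          simp [smul_eq_mul]; nlinarith [hab]
  · intro v₁ hv₁ v₂ hv₂ hle
    rw [hhX]
    simp only
    refine csInf_le_csInf (hbdd v₂) (hne v₁ hv₁) ?_
    rintro t ⟨μ, hμ, rfl⟩
    exact ⟨μ, hμ.trans hle, rfl⟩
end

section
/- Let μ* ∈ ℝ^d minimize the Behrens–Fisher objective F(μ) = (N_1/2) log(1 + M_X(μ)) + (N_2/2) log(1 + M_Y(μ)) over μ ∈ ℝ^d. Then M_X(μ*) ≤ M_X(Ȳ) and M_Y(μ*) ≤ M_Y(X̄); equivalently, the point (u_1*, u_2*) = (1 + M_X(μ*), 1 + M_Y(μ*)) satisfies 1 ≤ u_1* ≤ 1 + M_X(Ȳ) and 1 ≤ u_2* ≤ 1 + M_Y(X̄). -/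
open Matrix Real

theorem stmt6 (d : ℕ) (hd : 1 ≤ d)
    (S₁ S₂ : Matrix (Fin d) (Fin d) ℝ) (hS₁ : S₁.PosDef) (hS₂ : S₂.PosDef)
    (Xbar Ybar : Fin d → ℝ) (N₁ N₂ : ℝ) (hN₁ : 0 < N₁) (hN₂ : 0 < N₂)
    (Mx My F : (Fin d → ℝ) → ℝ)
    (hMx : Mx = fun μ => (Xbar - μ) ⬝ᵥ (S₁⁻¹ *ᵥ (Xbar - μ)))
    (hMy : My = fun μ => (Ybar - μ) ⬝ᵥ (S₂⁻¹ *ᵥ (Ybar - μ)))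
    (hF : F = fun μ => (N₁/2) * Real.log (1 + Mx μ) + (N₂/2) * Real.log (1 + My μ))
    (μstar : Fin d → ℝ) (hmin : ∀ μ : Fin d → ℝ, F μstar ≤ F μ) :
    (Mx μstar ≤ Mx Ybar ∧ My μstar ≤ My Xbar) ∧
    (1 ≤ 1 + Mx μstar ∧ 1 + Mx μstar ≤ 1 + Mx Ybar) ∧
    (1 ≤ 1 + My μstar ∧ 1 + My μstar ≤ 1 + My Xbar) := by
  have hMx0 : ∀ μ, 0 ≤ Mx μ := by
    intro μ
    rw [hMx]
    simpa using hS₁.inv.posSemidef.dotProduct_mulVec_nonneg (Xbar - μ)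
  have hMy0 : ∀ μ, 0 ≤ My μ := by
    intro μ
    rw [hMy]
    simpa using hS₂.inv.posSemidef.dotProduct_mulVec_nonneg (Ybar - μ)
  have hMxX : Mx Xbar = 0 := by simp [hMx]
  have hMyY : My Ybar = 0 := by simp [hMy]
  have hlogx : ∀ μ, 0 ≤ Real.log (1 + Mx μ) := fun μ =>
    Real.log_nonneg (by linarith [hMx0 μ])
  have hlogy : ∀ μ, 0 ≤ Real.log (1 + My μ) := fun μ =>
    Real.log_nonneg (by linarith [hMy0 μ])
  have h1 : Mx μstar ≤ Mx Ybar := by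
    have h := hmin Ybar
    rw [hF] at h
    simp only [hMyY, add_zero, Real.log_one, mul_zero] at h
    have hle : Real.log (1 + Mx μstar) ≤ Real.log (1 + Mx Ybar) := by
      have h2 : 0 ≤ (N₂/2) * Real.log (1 + My μstar) :=
        mul_nonneg (by linarith) (hlogy μstar)
      have h3 : (N₁/2) * Real.log (1 + Mx μstar) ≤ (N₁/2) * Real.log (1 + Mx Ybar) := by
        linarith
      exact le_of_mul_le_mul_left h3 (by linarith)
    have := Real.exp_log (show (0:ℝ) < 1 + Mx μstar by linarith [hMx0 μstar])
    have := Real.exp_log (show (0:ℝ) < 1 + Mx Ybar by linarith [hMx0 Ybar])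
    nlinarith [Real.exp_le_exp.mpr hle]
  have h2 : My μstar ≤ My Xbar := by
    have h := hmin Xbar
    rw [hF] at h
    simp only [hMxX, add_zero, Real.log_one, mul_zero] at h
    have hle : Real.log (1 + My μstar) ≤ Real.log (1 + My Xbar) := by
      have h2 : 0 ≤ (N₁/2) * Real.log (1 + Mx μstar) :=
        mul_nonneg (by linarith) (hlogx μstar)
      have h3 : (N₂/2) * Real.log (1 + My μstar) ≤ (N₂/2) * Real.log (1 + My Xbar) := by
        linarith
      exact le_of_mul_le_mul_left h3 (by linarith)
    have := Real.exp_log (show (0:ℝ) < 1 + My μstar by linarith [hMy0 μstar])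
    have := Real.exp_log (show (0:ℝ) < 1 + My Xbar by linarith [hMy0 Xbar])
    nlinarith [Real.exp_le_exp.mpr hle]
  exact ⟨⟨h1, h2⟩, ⟨by linarith [hMx0 μstar], by linarith⟩,
    ⟨by linarith [hMy0 μstar], by linarith⟩⟩
end

section
/- The Likelihood Ratio statistic is bounded above by the Wald statistic: inf_{μ ∈ ℝ^d} [ N_1 log(1 + M_X(μ)) + N_2 log(1 + M_Y(μ)) ] ≤ (X̄ − Ȳ)ᵀ (S_1/N_1 + S_2/N_2)⁻¹ (X̄ − Ȳ). -/
open Matrix Real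

lemma posdef_smul_aux {d : ℕ} {c : ℝ} (hc : 0 < c) {M : Matrix (Fin d) (Fin d) ℝ}
    (hM : M.PosDef) : (c • M).PosDef := by
  refine Matrix.PosDef.of_dotProduct_mulVec_pos ?_ (fun x hx => ?_)
  · unfold Matrix.IsHermitian
    rw [conjTranspose_smul, hM.1.eq]
    simp
  · rw [smul_mulVec, dotProduct_smul]
    have := hM.dotProduct_mulVec_pos hx
    exact smul_pos hc this

theorem stmt8 (d : ℕ) (hd : 1 ≤ d)
    (S₁ S₂ : Matrix (Fin d) (Fin d) ℝ) (hS₁ : S₁.PosDef) (hS₂ : S₂.PosDef)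
    (Xbar Ybar : Fin d → ℝ) (N₁ N₂ : ℝ) (hN₁ : 0 < N₁) (hN₂ : 0 < N₂)
    (Mx My : (Fin d → ℝ) → ℝ)
    (hMx : Mx = fun μ => (Xbar - μ) ⬝ᵥ (S₁⁻¹ *ᵥ (Xbar - μ)))
    (hMy : My = fun μ => (Ybar - μ) ⬝ᵥ (S₂⁻¹ *ᵥ (Ybar - μ)))
    (W : ℝ)
    (hW : W = (Xbar - Ybar) ⬝ᵥ ((N₁⁻¹ • S₁ + N₂⁻¹ • S₂)⁻¹ *ᵥ (Xbar - Ybar))) :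
    (⨅ μ : Fin d → ℝ, N₁ * Real.log (1 + Mx μ) + N₂ * Real.log (1 + My μ)) ≤ W := by
  have hT1 : (N₁⁻¹ • S₁).PosDef := posdef_smul_aux (by positivity) hS₁
  have hT2 : (N₂⁻¹ • S₂).PosDef := posdef_smul_aux (by positivity) hS₂
  set T : Matrix (Fin d) (Fin d) ℝ := N₁⁻¹ • S₁ + N₂⁻¹ • S₂ with hT
  have hTpd : T.PosDef := hT1.add hT2
  set v : Fin d → ℝ := Xbar - Ybar with hv
  set w : Fin d → ℝ := T⁻¹ *ᵥ v with hw
  set μ : Fin d → ℝ := Xbar - (N₁⁻¹ • S₁) *ᵥ w with hμ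
  -- nonnegativity of Mx, My
  have hMx0 : ∀ ν, 0 ≤ Mx ν := by
    intro ν
    have := hS₁.inv.posSemidef.dotProduct_mulVec_nonneg (Xbar - ν)
    simpa [hMx] using this
  have hMy0 : ∀ ν, 0 ≤ My ν := by
    intro ν
    have := hS₂.inv.posSemidef.dotProduct_mulVec_nonneg (Ybar - ν)
    simpa [hMy] using this
  -- bounded below by 0
  have hbdd : BddBelow (Set.range fun ν => N₁ * Real.log (1 + Mx ν) + N₂ * Real.log (1 + My ν)) := by
    refine ⟨0, ?_⟩
    rintro y ⟨ν, rfl⟩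
    have h1 : (0:ℝ) ≤ Real.log (1 + Mx ν) :=
      Real.log_nonneg (by linarith [hMx0 ν])
    have h2 : (0:ℝ) ≤ Real.log (1 + My ν) :=
      Real.log_nonneg (by linarith [hMy0 ν])
    positivity
  refine le_trans (ciInf_le hbdd μ) ?_
  -- log bound
  have hlog : ∀ m : ℝ, 0 ≤ m → Real.log (1 + m) ≤ m := by
    intro m hm
    have := Real.log_le_sub_one_of_pos (x := 1 + m) (by linarith)
    linarith
  have hkey : N₁ * Mx μ + N₂ * My μ = W := by
    have hTw : T *ᵥ w = v := by
      rw [hw, mulVec_mulVec, mul_nonsing_inv _ (isUnit_iff_ne_zero.mpr hTpd.det_pos.ne'), one_mulVec]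
    have hXμ : Xbar - μ = (N₁⁻¹ • S₁) *ᵥ w := by rw [hμ]; abel
    have hYμ : Ybar - μ = -((N₂⁻¹ • S₂) *ᵥ w) := by
      have h2 : Ybar = Xbar - v := by rw [hv]; abel
      rw [h2, hμ, ← hTw, hT, add_mulVec]; abel
    have hinv1 : S₁⁻¹ *ᵥ ((N₁⁻¹ • S₁) *ᵥ w) = N₁⁻¹ • w := by
      rw [mulVec_mulVec, Matrix.mul_smul,
        nonsing_inv_mul _ (isUnit_iff_ne_zero.mpr hS₁.det_pos.ne'),
        smul_mulVec, one_mulVec]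
    have hinv2 : S₂⁻¹ *ᵥ ((N₂⁻¹ • S₂) *ᵥ w) = N₂⁻¹ • w := by
      rw [mulVec_mulVec, Matrix.mul_smul,
        nonsing_inv_mul _ (isUnit_iff_ne_zero.mpr hS₂.det_pos.ne'),
        smul_mulVec, one_mulVec]
    have e1 : N₁ * Mx μ = ((N₁⁻¹ • S₁) *ᵥ w) ⬝ᵥ w := by
      rw [hMx]
      simp only
      rw [hXμ, hinv1, dotProduct_smul, smul_eq_mul, ← mul_assoc,
        mul_inv_cancel₀ hN₁.ne', one_mul]
    have e2 : N₂ * My μ = ((N₂⁻¹ • S₂) *ᵥ w) ⬝ᵥ w := by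
      rw [hMy]
      simp only
      rw [hYμ, mulVec_neg, hinv2, neg_dotProduct, dotProduct_neg, neg_neg,
        dotProduct_smul, smul_eq_mul, ← mul_assoc, mul_inv_cancel₀ hN₂.ne', one_mul]
    have hWw : W = v ⬝ᵥ w := by rw [hW, hw, hv]
    rw [e1, e2, hWw, ← add_dotProduct, ← add_mulVec, ← hT, hTw]
  have b1 := hlog _ (hMx0 μ)
  have b2 := hlog _ (hMy0 μ)
  nlinarith [hMx0 μ, hMy0 μ]
end

section
/- Let μ̂_0 = (N_1 S_1⁻¹ + N_2 S_2⁻¹)⁻¹ (N_1 S_1⁻¹ X̄ + N_2 S_2⁻¹ Ȳ). Then for every μ ∈ ℝ^d, N_1 M_X(μ) + N_2 M_Y(μ) ≥ N_1 M_X(μ̂_0) + N_2 M_Y(μ̂_0) = (X̄ − Ȳ)ᵀ (S_1/N_1 + S_2/N_2)⁻¹ (X̄ − Ȳ). In particular, the minimum value of μ ↦ N_1 M_X(μ) + N_2 M_Y(μ) equals the Wald statistic W. -/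
open Matrix Real

private lemma smulPosDef {d : ℕ} {M : Matrix (Fin d) (Fin d) ℝ} (hM : M.PosDef)
    {c : ℝ} (hc : 0 < c) : (c • M).PosDef := by
  refine posDef_iff_dotProduct_mulVec.mpr ⟨?_, fun x hx => ?_⟩
  · unfold Matrix.IsHermitian
    rw [conjTranspose_smul, hM.1.eq]; simp
  · rw [smul_mulVec, dotProduct_smul, smul_eq_mul]
    exact mul_pos hc (hM.dotProduct_mulVec_pos hx)

private lemma dotSymm {d : ℕ} {M : Matrix (Fin d) (Fin d) ℝ} (hM : Mᵀ = M)
    (x y : Fin d → ℝ) : x ⬝ᵥ M *ᵥ y = y ⬝ᵥ M *ᵥ x := by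
  rw [dotProduct_comm, dotProduct_mulVec, ← vecMul_transpose, hM]

private lemma dotLeft {d : ℕ} (M : Matrix (Fin d) (Fin d) ℝ)
    (x y : Fin d → ℝ) : (M *ᵥ x) ⬝ᵥ y = x ⬝ᵥ (Mᵀ *ᵥ y) := by
  rw [dotProduct_mulVec, vecMul_transpose, dotProduct_comm]

private lemma quadExp {d : ℕ} {M : Matrix (Fin d) (Fin d) ℝ} (hM : Mᵀ = M)
    (u h : Fin d → ℝ) :
    (u - h) ⬝ᵥ M *ᵥ (u - h) = u ⬝ᵥ M *ᵥ u - 2 * (h ⬝ᵥ M *ᵥ u) + h ⬝ᵥ M *ᵥ h := by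
  have hs : u ⬝ᵥ M *ᵥ h = h ⬝ᵥ M *ᵥ u := dotSymm hM u h
  simp only [sub_dotProduct, dotProduct_sub, mulVec_sub, hs]
  ring

theorem stmt9 (d : ℕ) (hd : 1 ≤ d)
    (S₁ S₂ : Matrix (Fin d) (Fin d) ℝ) (hS₁ : S₁.PosDef) (hS₂ : S₂.PosDef)
    (Xbar Ybar : Fin d → ℝ) (N₁ N₂ : ℝ) (hN₁ : 0 < N₁) (hN₂ : 0 < N₂)
    (Mx My : (Fin d → ℝ) → ℝ)
    (hMx : Mx = fun μ => (Xbar - μ) ⬝ᵥ (S₁⁻¹ *ᵥ (Xbar - μ)))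
    (hMy : My = fun μ => (Ybar - μ) ⬝ᵥ (S₂⁻¹ *ᵥ (Ybar - μ)))
    (W : ℝ)
    (hW : W = (Xbar - Ybar) ⬝ᵥ ((N₁⁻¹ • S₁ + N₂⁻¹ • S₂)⁻¹ *ᵥ (Xbar - Ybar)))
    (μhat₀ : Fin d → ℝ)
    (hμhat₀ : μhat₀ = (N₁ • S₁⁻¹ + N₂ • S₂⁻¹)⁻¹ *ᵥ (N₁ • (S₁⁻¹ *ᵥ Xbar) + N₂ • (S₂⁻¹ *ᵥ Ybar))) :
    (∀ μ : Fin d → ℝ, N₁ * Mx μhat₀ + N₂ * My μhat₀ ≤ N₁ * Mx μ + N₂ * My μ) ∧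
    N₁ * Mx μhat₀ + N₂ * My μhat₀ = W := by
  set P := N₁ • S₁⁻¹ with hPdef
  set Q := N₂ • S₂⁻¹ with hQdef
  set A := P + Q with hAdef
  have hPd : P.PosDef := smulPosDef hS₁.inv hN₁
  have hQd : Q.PosDef := smulPosDef hS₂.inv hN₂
  have hAd : A.PosDef := hPd.add hQd
  have hAt : Aᵀ = A := hAd.1
  have hPt : Pᵀ = P := hPd.1
  have hQt : Qᵀ = Q := hQd.1
  have hAu : IsUnit A.det := isUnit_iff_ne_zero.mpr hAd.det_pos.ne'
  have hPu : IsUnit P.det := isUnit_iff_ne_zero.mpr hPd.det_pos.ne'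
  have hQu : IsUnit Q.det := isUnit_iff_ne_zero.mpr hQd.det_pos.ne'
  have hS₁u : IsUnit S₁.det := isUnit_iff_ne_zero.mpr hS₁.det_pos.ne'
  have hS₂u : IsUnit S₂.det := isUnit_iff_ne_zero.mpr hS₂.det_pos.ne'
  have hAinv : A * A⁻¹ = 1 := mul_nonsing_inv A hAu
  have hinvA : A⁻¹ * A = 1 := nonsing_inv_mul A hAu
  have hAit : A⁻¹ᵀ = A⁻¹ := by rw [transpose_nonsing_inv, hAt]
  -- the objective function in matrix form
  have hg : ∀ μ : Fin d → ℝ, N₁ * Mx μ + N₂ * My μ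
      = (Xbar - μ) ⬝ᵥ P *ᵥ (Xbar - μ) + (Ybar - μ) ⬝ᵥ Q *ᵥ (Ybar - μ) := by
    intro μ
    simp [hMx, hMy, hPdef, hQdef, smul_mulVec, dotProduct_smul]
  -- the normal equation
  have hAμ : A *ᵥ μhat₀ = P *ᵥ Xbar + Q *ᵥ Ybar := by
    have hb : N₁ • (S₁⁻¹ *ᵥ Xbar) + N₂ • (S₂⁻¹ *ᵥ Ybar) = P *ᵥ Xbar + Q *ᵥ Ybar := by
      simp [hPdef, hQdef, smul_mulVec]
    rw [hμhat₀, hb, mulVec_mulVec, hAinv, one_mulVec]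
  -- Part 1: minimality
  have hmin : ∀ μ : Fin d → ℝ, N₁ * Mx μhat₀ + N₂ * My μhat₀ ≤ N₁ * Mx μ + N₂ * My μ := by
    intro μ
    set h := μ - μhat₀ with hh
    have hXs : Xbar - μ = (Xbar - μhat₀) - h := by rw [hh]; abel
    have hYs : Ybar - μ = (Ybar - μhat₀) - h := by rw [hh]; abel
    have hcross : h ⬝ᵥ P *ᵥ (Xbar - μhat₀) + h ⬝ᵥ Q *ᵥ (Ybar - μhat₀) = 0 := by
      rw [← dotProduct_add, mulVec_sub, mulVec_sub, ← add_sub_assoc]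
      have : P *ᵥ Xbar - P *ᵥ μhat₀ + Q *ᵥ Ybar - Q *ᵥ μhat₀
          = (P *ᵥ Xbar + Q *ᵥ Ybar) - A *ᵥ μhat₀ := by
        rw [hAdef, add_mulVec]; abel
      rw [this, hAμ, sub_self, dotProduct_zero]
    have hAh : h ⬝ᵥ A *ᵥ h = h ⬝ᵥ P *ᵥ h + h ⬝ᵥ Q *ᵥ h := by
      rw [hAdef, add_mulVec, dotProduct_add]
    have hpos : 0 ≤ h ⬝ᵥ P *ᵥ h + h ⬝ᵥ Q *ᵥ h := by
      rw [← hAh]; simpa using hAd.posSemidef.dotProduct_mulVec_nonneg h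
    rw [hg μ, hg μhat₀, hXs, hYs, quadExp hPt (Xbar - μhat₀) h,
      quadExp hQt (Ybar - μhat₀) h]
    linarith [hcross, hpos]
  refine ⟨hmin, ?_⟩
  -- Part 2: the value at the minimizer
  set z := Xbar - Ybar with hzdef
  have hX : Xbar - μhat₀ = (A⁻¹ * Q) *ᵥ z := by
    have h1 : A *ᵥ Xbar - (P *ᵥ Xbar + Q *ᵥ Ybar) = Q *ᵥ z := by
      rw [hAdef, add_mulVec, hzdef, mulVec_sub]; abel
    calc Xbar - μhat₀ = A⁻¹ *ᵥ (A *ᵥ Xbar - A *ᵥ μhat₀) := by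
          rw [mulVec_sub, mulVec_mulVec, mulVec_mulVec, hinvA, one_mulVec, one_mulVec]
      _ = (A⁻¹ * Q) *ᵥ z := by rw [hAμ, h1, mulVec_mulVec]
  have hY : Ybar - μhat₀ = -((A⁻¹ * P) *ᵥ z) := by
    have h1 : A *ᵥ Ybar - (P *ᵥ Xbar + Q *ᵥ Ybar) = -(P *ᵥ z) := by
      rw [hAdef, add_mulVec, hzdef, mulVec_sub]; abel
    calc Ybar - μhat₀ = A⁻¹ *ᵥ (A *ᵥ Ybar - A *ᵥ μhat₀) := by
          rw [mulVec_sub, mulVec_mulVec, mulVec_mulVec, hinvA, one_mulVec, one_mulVec]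
      _ = -((A⁻¹ * P) *ᵥ z) := by rw [hAμ, h1, mulVec_neg, mulVec_mulVec]
  -- commutation lemma
  have hcomm : Q * A⁻¹ * P = P * A⁻¹ * Q := by
    have e1 : Q * A⁻¹ * P = P - P * A⁻¹ * P := by
      have hQA : Q = A - P := by rw [hAdef]; abel
      rw [hQA, sub_mul, sub_mul, hAinv, one_mul]
    have e2 : P * A⁻¹ * Q = P - P * A⁻¹ * P := by
      have hQA : Q = A - P := by rw [hAdef]; abel
      rw [hQA, mul_sub, mul_assoc, hinvA, mul_one]
    rw [e1, e2]
  -- key matrix identity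
  have hQP : A⁻¹ * Q + A⁻¹ * P = A⁻¹ * A := by
    rw [← mul_add, add_comm Q P, ← hAdef]
  have hkey : (A⁻¹ * Q)ᵀ * P * (A⁻¹ * Q) + (A⁻¹ * P)ᵀ * Q * (A⁻¹ * P)
      = P * A⁻¹ * Q := by
    rw [transpose_mul, transpose_mul, hAit, hPt, hQt]
    calc Q * A⁻¹ * P * (A⁻¹ * Q) + P * A⁻¹ * Q * (A⁻¹ * P)
        = (P * A⁻¹ * Q) * (A⁻¹ * Q) + (P * A⁻¹ * Q) * (A⁻¹ * P) := by rw [hcomm]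
      _ = (P * A⁻¹ * Q) * (A⁻¹ * Q + A⁻¹ * P) := by rw [mul_add]
      _ = (P * A⁻¹ * Q) * (A⁻¹ * A) := by rw [hQP]
      _ = P * A⁻¹ * Q := by rw [hinvA, mul_one]
  -- identification of the Wald matrix
  have hPinv : P⁻¹ = N₁⁻¹ • S₁ := by
    apply inv_eq_right_inv
    rw [hPdef, smul_mul_smul_comm, nonsing_inv_mul S₁ hS₁u]
    rw [mul_inv_cancel₀ hN₁.ne', one_smul]
  have hQinv : Q⁻¹ = N₂⁻¹ • S₂ := by
    apply inv_eq_right_inv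
    rw [hQdef, smul_mul_smul_comm, nonsing_inv_mul S₂ hS₂u]
    rw [mul_inv_cancel₀ hN₂.ne', one_smul]
  have hWmat : (N₁⁻¹ • S₁ + N₂⁻¹ • S₂)⁻¹ = P * A⁻¹ * Q := by
    have hsum : N₁⁻¹ • S₁ + N₂⁻¹ • S₂ = P⁻¹ * A * Q⁻¹ := by
      rw [hPinv, hQinv]
      rw [hAdef, mul_add, add_mul, ← hPinv, ← hQinv]
      rw [nonsing_inv_mul P hPu, one_mul, mul_assoc, mul_nonsing_inv Q hQu, mul_one]
      rw [add_comm]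
    rw [hsum, Matrix.mul_inv_rev, Matrix.mul_inv_rev]
    rw [nonsing_inv_nonsing_inv P hPu, nonsing_inv_nonsing_inv Q hQu]
    rw [← mul_assoc, hcomm]
  -- finish
  rw [hg μhat₀, hX, hY, hW, hWmat, hzdef]
  rw [show (-((A⁻¹ * P) *ᵥ (Xbar - Ybar))) ⬝ᵥ Q *ᵥ (-((A⁻¹ * P) *ᵥ (Xbar - Ybar)))
      = ((A⁻¹ * P) *ᵥ (Xbar - Ybar)) ⬝ᵥ Q *ᵥ ((A⁻¹ * P) *ᵥ (Xbar - Ybar)) by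
    rw [mulVec_neg, neg_dotProduct, dotProduct_neg, neg_neg]]
  rw [dotLeft, dotLeft, mulVec_mulVec, mulVec_mulVec, mulVec_mulVec, mulVec_mulVec]
  rw [← dotProduct_add, ← add_mulVec, hkey]
end

section
/- Let μ̂_0 = (N_1 S_1⁻¹ + N_2 S_2⁻¹)⁻¹ (N_1 S_1⁻¹ X̄ + N_2 S_2⁻¹ Ȳ). Then N_1 log(1 + M_X(μ̂_0)) + N_2 log(1 + M_Y(μ̂_0)) ≤ (X̄ − Ȳ)ᵀ (S_1/N_1 + S_2/N_2)⁻¹ (X̄ − Ȳ); that is, the log-likelihood-ratio value LR_0 evaluated at the natural initial point μ̂_0 satisfies W ≥ LR_0, where W is the Wald statistic. -/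
open Matrix Real

lemma smul_posdef {n : ℕ} {M : Matrix (Fin n) (Fin n) ℝ} (hM : M.PosDef) {c : ℝ} (hc : 0 < c) :
    (c • M).PosDef := by
  rw [posDef_iff_dotProduct_mulVec] at hM ⊢
  constructor
  · unfold Matrix.IsHermitian at *
    rw [conjTranspose_smul, hM.1]
    simp
  · intro x hx
    have := hM.2 hx
    simp only [star_trivial] at this ⊢
    rw [smul_mulVec, dotProduct_smul, smul_eq_mul]
    exact mul_pos hc this

lemma ring_helper {R : Type*} [Ring R] (a b c d e : R)
    (hda : d*a = 1) (heb : e*b = 1)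
    (hc1 : (a+b)*c = 1) (hc2 : c*(a+b) = 1) :
    (d + e) * (a*(c*b)) = 1 ∧ b*(c*(a*(c*b))) + a*(c*(b*(c*a))) = a*(c*b) := by
  have h1 : b*(c*a) = a - a*(c*a) := by
    have h : (a+b)*(c*a) = a := by rw [← mul_assoc, hc1, one_mul]
    rw [add_mul] at h
    exact eq_sub_of_add_eq' h
  have h2 : a*(c*b) = a - a*(c*a) := by
    have h : a*(c*(a+b)) = a := by rw [hc2, mul_one]
    rw [mul_add, mul_add] at h
    exact eq_sub_of_add_eq' h
  have hcomm : b*(c*a) = a*(c*b) := h1.trans h2.symm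
  constructor
  · have hd' : d*(a*(c*b)) = c*b := by rw [← mul_assoc, hda, one_mul]
    have he' : e*(a*(c*b)) = c*a := by rw [← hcomm, ← mul_assoc, heb, one_mul]
    rw [add_mul, hd', he', ← mul_add, add_comm (b:R) a, hc2]
  · have hb' : b*(c*(a*(c*b))) = a*(c*(b*(c*b))) := by
      have := congrArg (· * (c*b)) hcomm
      simpa only [mul_assoc] using this
    rw [hb', ← mul_add, ← mul_add, ← mul_add, ← mul_add, add_comm b a, hc2, mul_one]

lemma quad_helper {n : ℕ} (P M : Matrix (Fin n) (Fin n) ℝ) (v : Fin n → ℝ) :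
    (P *ᵥ v) ⬝ᵥ (M *ᵥ (P *ᵥ v)) = v ⬝ᵥ ((Pᵀ * (M * P)) *ᵥ v) := by
  rw [dotProduct_comm, ← mulVec_mulVec, ← mulVec_mulVec, dotProduct_comm]
  rw [dotProduct_mulVec v Pᵀ, vecMul_transpose]

theorem stmt12 (d : ℕ) (hd : 1 ≤ d)
    (S₁ S₂ : Matrix (Fin d) (Fin d) ℝ) (hS₁ : S₁.PosDef) (hS₂ : S₂.PosDef)
    (Xbar Ybar : Fin d → ℝ) (N₁ N₂ : ℝ) (hN₁ : 0 < N₁) (hN₂ : 0 < N₂)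
    (Mx My : (Fin d → ℝ) → ℝ)
    (hMx : Mx = fun μ => (Xbar - μ) ⬝ᵥ (S₁⁻¹ *ᵥ (Xbar - μ)))
    (hMy : My = fun μ => (Ybar - μ) ⬝ᵥ (S₂⁻¹ *ᵥ (Ybar - μ)))
    (W : ℝ)
    (hW : W = (Xbar - Ybar) ⬝ᵥ ((N₁⁻¹ • S₁ + N₂⁻¹ • S₂)⁻¹ *ᵥ (Xbar - Ybar)))
    (μhat₀ : Fin d → ℝ)
    (hμhat₀ : μhat₀ = (N₁ • S₁⁻¹ + N₂ • S₂⁻¹)⁻¹ *ᵥ (N₁ • (S₁⁻¹ *ᵥ Xbar) + N₂ • (S₂⁻¹ *ᵥ Ybar))) :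
    N₁ * Real.log (1 + Mx μhat₀) + N₂ * Real.log (1 + My μhat₀) ≤ W := by
  set A := N₁ • S₁⁻¹ with hAdef
  set B := N₂ • S₂⁻¹ with hBdef
  have hA : A.PosDef := smul_posdef hS₁.inv hN₁
  have hB : B.PosDef := smul_posdef hS₂.inv hN₂
  have hABp : (A+B).PosDef := hA.add hB
  set C := (A+B)⁻¹ with hCdef
  have hdet : IsUnit (A+B).det := isUnit_iff_ne_zero.mpr hABp.det_pos.ne'
  have hc1 : (A+B)*C = 1 := mul_nonsing_inv _ hdet
  have hc2 : C*(A+B) = 1 := nonsing_inv_mul _ hdet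
  have hdetS₁ : IsUnit S₁.det := isUnit_iff_ne_zero.mpr hS₁.det_pos.ne'
  have hdetS₂ : IsUnit S₂.det := isUnit_iff_ne_zero.mpr hS₂.det_pos.ne'
  have hda : (N₁⁻¹ • S₁) * A = 1 := by
    rw [hAdef, Matrix.smul_mul, Matrix.mul_smul, smul_smul,
      inv_mul_cancel₀ hN₁.ne', one_smul, mul_nonsing_inv _ hdetS₁]
  have heb : (N₂⁻¹ • S₂) * B = 1 := by
    rw [hBdef, Matrix.smul_mul, Matrix.mul_smul, smul_smul,
      inv_mul_cancel₀ hN₂.ne', one_smul, mul_nonsing_inv _ hdetS₂]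
  obtain ⟨hinv1, hkey⟩ := ring_helper A B C (N₁⁻¹ • S₁) (N₂⁻¹ • S₂) hda heb hc1 hc2
  have hWinv : (N₁⁻¹ • S₁ + N₂⁻¹ • S₂)⁻¹ = A*(C*B) := inv_eq_right_inv hinv1
  -- symmetry
  have hAt : Aᵀ = A := by
    have := hA.1; simpa [Matrix.IsHermitian] using this
  have hBt : Bᵀ = B := by
    have := hB.1; simpa [Matrix.IsHermitian] using this
  have hCt : Cᵀ = C := by
    rw [hCdef, transpose_nonsing_inv, transpose_add, hAt, hBt]
  set v := Xbar - Ybar with hvdef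
  -- vector identities
  have hX : Xbar - μhat₀ = (C*B) *ᵥ v := by
    have e1 : Xbar = C *ᵥ ((A+B) *ᵥ Xbar) := by
      rw [mulVec_mulVec, hc2, one_mulVec]
    have e2 : (A+B) *ᵥ Xbar - (A *ᵥ Xbar + B *ᵥ Ybar) = B *ᵥ v := by
      rw [add_mulVec, hvdef, mulVec_sub]; abel
    rw [hμhat₀, ← smul_mulVec, ← smul_mulVec, ← hAdef, ← hBdef]
    calc Xbar - C *ᵥ (A *ᵥ Xbar + B *ᵥ Ybar)
        = C *ᵥ ((A+B) *ᵥ Xbar) - C *ᵥ (A *ᵥ Xbar + B *ᵥ Ybar) := by rw [← e1]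
      _ = C *ᵥ ((A+B) *ᵥ Xbar - (A *ᵥ Xbar + B *ᵥ Ybar)) := by rw [mulVec_sub]
      _ = C *ᵥ (B *ᵥ v) := by rw [e2]
      _ = (C*B) *ᵥ v := mulVec_mulVec ..
  have hY : Ybar - μhat₀ = (C*A) *ᵥ (-v) := by
    have e1 : Ybar = C *ᵥ ((A+B) *ᵥ Ybar) := by
      rw [mulVec_mulVec, hc2, one_mulVec]
    have e2 : (A+B) *ᵥ Ybar - (A *ᵥ Xbar + B *ᵥ Ybar) = A *ᵥ (-v) := by
      rw [add_mulVec, hvdef, mulVec_neg, mulVec_sub]; abel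
    rw [hμhat₀, ← smul_mulVec, ← smul_mulVec, ← hAdef, ← hBdef]
    calc Ybar - C *ᵥ (A *ᵥ Xbar + B *ᵥ Ybar)
        = C *ᵥ ((A+B) *ᵥ Ybar) - C *ᵥ (A *ᵥ Xbar + B *ᵥ Ybar) := by rw [← e1]
      _ = C *ᵥ ((A+B) *ᵥ Ybar - (A *ᵥ Xbar + B *ᵥ Ybar)) := by rw [mulVec_sub]
      _ = C *ᵥ (A *ᵥ (-v)) := by rw [e2]
      _ = (C*A) *ᵥ (-v) := mulVec_mulVec ..
  -- quadratic form values
  have hMxval : N₁ * Mx μhat₀ = v ⬝ᵥ ((B*(C*(A*(C*B)))) *ᵥ v) := by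
    rw [hMx]
    simp only
    rw [hX, quad_helper, transpose_mul, hBt, hCt]
    have hm : N₁ • ((B*C) * (S₁⁻¹*(C*B))) = B*(C*(A*(C*B))) := by
      rw [hAdef]
      simp only [Matrix.smul_mul, Matrix.mul_smul, mul_assoc]
    rw [← hm, smul_mulVec, dotProduct_smul, smul_eq_mul]
  have hMyval : N₂ * My μhat₀ = v ⬝ᵥ ((A*(C*(B*(C*A)))) *ᵥ v) := by
    rw [hMy]
    simp only
    rw [hY, quad_helper, transpose_mul, hAt, hCt]
    have hm : N₂ • ((A*C) * (S₂⁻¹*(C*A))) = A*(C*(B*(C*A))) := by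
      rw [hBdef]
      simp only [Matrix.smul_mul, Matrix.mul_smul, mul_assoc]
    rw [← hm, smul_mulVec, dotProduct_smul, smul_eq_mul]
    simp [mulVec_neg]
  have hsum : N₁ * Mx μhat₀ + N₂ * My μhat₀ = W := by
    rw [hMxval, hMyval, ← dotProduct_add, ← add_mulVec, hkey, hW, hWinv]
  -- nonnegativity
  have hx0 : 0 ≤ Mx μhat₀ := by
    rw [hMx]
    have := hS₁.inv.posSemidef.re_dotProduct_nonneg (Xbar - μhat₀)
    simpa using this
  have hy0 : 0 ≤ My μhat₀ := by
    rw [hMy]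
    have := hS₂.inv.posSemidef.re_dotProduct_nonneg (Ybar - μhat₀)
    simpa using this
  have hlx : Real.log (1 + Mx μhat₀) ≤ Mx μhat₀ := by
    have := Real.log_le_sub_one_of_pos (show (0:ℝ) < 1 + Mx μhat₀ by linarith)
    linarith
  have hly : Real.log (1 + My μhat₀) ≤ My μhat₀ := by
    have := Real.log_le_sub_one_of_pos (show (0:ℝ) < 1 + My μhat₀ by linarith)
    linarith
  calc N₁ * Real.log (1 + Mx μhat₀) + N₂ * Real.log (1 + My μhat₀)
      ≤ N₁ * Mx μhat₀ + N₂ * My μhat₀ :=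
        add_le_add (mul_le_mul_of_nonneg_left hlx hN₁.le)
          (mul_le_mul_of_nonneg_left hly hN₂.le)
    _ = W := hsum
end

section
/- Define h_X : [0, ∞) → ℝ by h_X(v) = inf { M_Y(μ) : μ ∈ ℝ^d, M_X(μ) ≤ v }, and for λ ≥ 0 let μ̂(λ) = (S_2⁻¹ + λ S_1⁻¹)⁻¹ (S_2⁻¹ Ȳ + λ S_1⁻¹ X̄). If λ* ≥ 0 and v_1 = M_X(μ̂(λ*)), then for every v ≥ 0, h_X(v_1) − λ* (v − v_1) ≤ h_X(v); that is, −λ* is a subgradient of h_X at v_1. -/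
open Matrix Real

lemma symdot {d : ℕ} (M : Matrix (Fin d) (Fin d) ℝ) (hM : Mᵀ = M) (v w : Fin d → ℝ) :
    v ⬝ᵥ (M *ᵥ w) = w ⬝ᵥ (M *ᵥ v) := by
  rw [dotProduct_mulVec, ← mulVec_transpose, hM, dotProduct_comm]

lemma key_general {d : ℕ} (P Q : Matrix (Fin d) (Fin d) ℝ) (hP : Pᵀ = P) (hQ : Qᵀ = Q)
    (a b x y : Fin d → ℝ) :
    (a - x) ⬝ᵥ (P *ᵥ (a - x)) + (b - x) ⬝ᵥ (Q *ᵥ (b - x))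
      - ((a - y) ⬝ᵥ (P *ᵥ (a - y)) + (b - y) ⬝ᵥ (Q *ᵥ (b - y)))
      = (x - y) ⬝ᵥ ((P + Q) *ᵥ (x - y))
        + 2 * ((x - y) ⬝ᵥ ((P + Q) *ᵥ y) - (x - y) ⬝ᵥ (P *ᵥ a + Q *ᵥ b)) := by
  have h1 := symdot P hP a x
  have h2 := symdot P hP a y
  have h3 := symdot P hP x y
  have h4 := symdot Q hQ b x
  have h5 := symdot Q hQ b y
  have h6 := symdot Q hQ x y
  simp only [mulVec_sub, mulVec_add, add_mulVec, dotProduct_sub, sub_dotProduct,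
    dotProduct_add, add_dotProduct]
  linarith

theorem stmt14 (d : ℕ) (hd : 1 ≤ d)
    (S₁ S₂ : Matrix (Fin d) (Fin d) ℝ) (hS₁ : S₁.PosDef) (hS₂ : S₂.PosDef)
    (Xbar Ybar : Fin d → ℝ)
    (Mx My : (Fin d → ℝ) → ℝ)
    (hMx : Mx = fun μ => (Xbar - μ) ⬝ᵥ (S₁⁻¹ *ᵥ (Xbar - μ)))
    (hMy : My = fun μ => (Ybar - μ) ⬝ᵥ (S₂⁻¹ *ᵥ (Ybar - μ)))
    (hX : ℝ → ℝ)
    (hhX : hX = fun v => sInf {t : ℝ | ∃ μ : Fin d → ℝ, Mx μ ≤ v ∧ t = My μ})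
    (lamstar : ℝ) (hlam : 0 ≤ lamstar) (μhat : Fin d → ℝ)
    (hμhat : μhat = (S₂⁻¹ + lamstar • S₁⁻¹)⁻¹ *ᵥ (S₂⁻¹ *ᵥ Ybar + lamstar • (S₁⁻¹ *ᵥ Xbar)))
    (v₁ : ℝ) (hv₁ : v₁ = Mx μhat) :
    ∀ v : ℝ, 0 ≤ v → hX v₁ - lamstar * (v - v₁) ≤ hX v := by
  intro v hv
  subst hv₁
  -- basic positivity/symmetry facts
  have hS₁i : (S₁⁻¹).PosDef := hS₁.inv
  have hS₂i : (S₂⁻¹).PosDef := hS₂.inv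
  have hS₁s : (S₁⁻¹)ᵀ = S₁⁻¹ := by
    have := hS₁i.isHermitian
    simpa [Matrix.IsHermitian, Matrix.conjTranspose_eq_transpose_of_trivial] using this
  have hS₂s : (S₂⁻¹)ᵀ = S₂⁻¹ := by
    have := hS₂i.isHermitian
    simpa [Matrix.IsHermitian, Matrix.conjTranspose_eq_transpose_of_trivial] using this
  set P : Matrix (Fin d) (Fin d) ℝ := lamstar • S₁⁻¹ with hP
  have hPs : Pᵀ = P := by rw [hP, Matrix.transpose_smul, hS₁s]
  have hPsd : P.PosSemidef := by
    refine .of_dotProduct_mulVec_nonneg ?_ (fun x => ?_)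
    · have := hS₁i.isHermitian
      simpa [Matrix.IsHermitian, hP] using congrArg (lamstar • ·) this
    · have h0 : (0:ℝ) ≤ x ⬝ᵥ (S₁⁻¹ *ᵥ x) := by
        simpa using hS₁i.posSemidef.dotProduct_mulVec_nonneg x
      have : star x ⬝ᵥ (P *ᵥ x) = lamstar * (x ⬝ᵥ (S₁⁻¹ *ᵥ x)) := by
        simp [hP, smul_mulVec, dotProduct_smul]
      rw [this]
      positivity
  set A : Matrix (Fin d) (Fin d) ℝ := S₂⁻¹ + lamstar • S₁⁻¹ with hA
  have hApd : A.PosDef := hS₂i.add_posSemidef hPsd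
  have hstat : A *ᵥ μhat = S₂⁻¹ *ᵥ Ybar + lamstar • (S₁⁻¹ *ᵥ Xbar) := by
    rw [hμhat, mulVec_mulVec, Matrix.mul_nonsing_inv _ hApd.det_pos.ne'.isUnit, one_mulVec]
  -- nonnegativity of Mx and My
  have hMx_nonneg : ∀ μ, 0 ≤ Mx μ := by
    intro μ
    rw [hMx]
    simpa using hS₁i.posSemidef.dotProduct_mulVec_nonneg (Xbar - μ)
  have hMy_nonneg : ∀ μ, 0 ≤ My μ := by
    intro μ
    rw [hMy]
    simpa using hS₂i.posSemidef.dotProduct_mulVec_nonneg (Ybar - μ)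
  -- the Lagrangian inequality
  have hkey : ∀ μ : Fin d → ℝ,
      My μhat + lamstar * Mx μhat ≤ My μ + lamstar * Mx μ := by
    intro μ
    have hgen := key_general P (S₂⁻¹) hPs hS₂s Xbar Ybar μ μhat
    have hPQ : P + S₂⁻¹ = A := by rw [hA, hP, add_comm]
    rw [hPQ] at hgen
    have hstat' : (μ - μhat) ⬝ᵥ (A *ᵥ μhat) - (μ - μhat) ⬝ᵥ (P *ᵥ Xbar + S₂⁻¹ *ᵥ Ybar) = 0 := by
      rw [hstat, hP, smul_mulVec]
      ring_nf
    rw [hstat'] at hgen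
    have hquadnn : 0 ≤ (μ - μhat) ⬝ᵥ (A *ᵥ (μ - μhat)) := by
      simpa using hApd.posSemidef.dotProduct_mulVec_nonneg (μ - μhat)
    have hlx : ∀ ν : Fin d → ℝ, lamstar * Mx ν = (Xbar - ν) ⬝ᵥ (P *ᵥ (Xbar - ν)) := by
      intro ν
      rw [hMx, hP]
      simp [smul_mulVec, dotProduct_smul]
    have hly : ∀ ν : Fin d → ℝ, My ν = (Ybar - ν) ⬝ᵥ (S₂⁻¹ *ᵥ (Ybar - ν)) := by
      intro ν; rw [hMy]
    rw [hlx μ, hlx μhat, hly μ, hly μhat]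
    linarith [hgen]
  -- hX v₁ ≤ My μhat
  have hset_bdd : ∀ w : ℝ, BddBelow {t : ℝ | ∃ μ : Fin d → ℝ, Mx μ ≤ w ∧ t = My μ} := by
    intro w
    refine ⟨0, fun t ht => ?_⟩
    obtain ⟨μ, _, rfl⟩ := ht
    exact hMy_nonneg μ
  have h1 : hX (Mx μhat) ≤ My μhat := by
    rw [hhX]
    exact csInf_le (hset_bdd _) ⟨μhat, le_refl _, rfl⟩
  -- lower bound for hX v
  have hgoal : hX v = sInf {t : ℝ | ∃ μ : Fin d → ℝ, Mx μ ≤ v ∧ t = My μ} := by rw [hhX]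
  rw [hgoal]
  have hne : {t : ℝ | ∃ μ : Fin d → ℝ, Mx μ ≤ v ∧ t = My μ}.Nonempty := by
    refine ⟨My Xbar, Xbar, ?_, rfl⟩
    rw [hMx]
    simpa using hv
  refine le_csInf hne ?_
  intro t ht
  obtain ⟨μ, hμle, rfl⟩ := ht
  have hvv : lamstar * Mx μ ≤ lamstar * v := mul_le_mul_of_nonneg_left hμle hlam
  linarith [h1, hkey μ, hvv]
end

section
/- Let ε > 0, let μ* ∈ ℝ^d minimize F over ℝ^d, and set u_1* = 1 + M_X(μ*). Define h_X(v) = inf { M_Y(μ) : μ ∈ ℝ^d, M_X(μ) ≤ v } for v ≥ 0. If t ≥ 1 satisfies t ≤ u_1* ≤ (1 + 2ε/N_1) t, then (N_1/2) log((1 + 2ε/N_1) t) + (N_2/2) log(1 + h_X((1 + 2ε/N_1) t − 1)) ≤ F(μ*) + ε. (This is the key step showing that the Discretization Algorithm's candidate at the grid point following t is an ε-solution of the Behrens–Fisher Problem.) -/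
open Matrix Real

theorem stmt19 (d : ℕ) (hd : 1 ≤ d)
    (S₁ S₂ : Matrix (Fin d) (Fin d) ℝ) (hS₁ : S₁.PosDef) (hS₂ : S₂.PosDef)
    (Xbar Ybar : Fin d → ℝ) (N₁ N₂ : ℝ) (hN₁ : 0 < N₁) (hN₂ : 0 < N₂)
    (Mx My F : (Fin d → ℝ) → ℝ)
    (hMx : Mx = fun μ => (Xbar - μ) ⬝ᵥ (S₁⁻¹ *ᵥ (Xbar - μ)))
    (hMy : My = fun μ => (Ybar - μ) ⬝ᵥ (S₂⁻¹ *ᵥ (Ybar - μ)))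
    (hF : F = fun μ => (N₁/2) * Real.log (1 + Mx μ) + (N₂/2) * Real.log (1 + My μ))
    (hX : ℝ → ℝ)
    (hhX : hX = fun v => sInf {t : ℝ | ∃ μ : Fin d → ℝ, Mx μ ≤ v ∧ t = My μ})
    (ε : ℝ) (hε : 0 < ε)
    (μstar : Fin d → ℝ) (hmin : ∀ μ : Fin d → ℝ, F μstar ≤ F μ)
    (u₁star : ℝ) (hu₁star : u₁star = 1 + Mx μstar)
    (t : ℝ) (ht1 : 1 ≤ t) (htl : t ≤ u₁star) (htu : u₁star ≤ (1 + 2*ε/N₁) * t) :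
    (N₁/2) * Real.log ((1 + 2*ε/N₁) * t)
      + (N₂/2) * Real.log (1 + hX ((1 + 2*ε/N₁) * t - 1)) ≤ F μstar + ε := by
  have hMxnn : ∀ μ, 0 ≤ Mx μ := by
    intro μ; rw [hMx]
    simpa using (hS₁.inv.posSemidef.dotProduct_mulVec_nonneg (Xbar - μ))
  have hMynn : ∀ μ, 0 ≤ My μ := by
    intro μ; rw [hMy]
    simpa using (hS₂.inv.posSemidef.dotProduct_mulVec_nonneg (Ybar - μ))
  set c : ℝ := 1 + 2*ε/N₁ with hc
  have hεN : 0 < 2*ε/N₁ := by positivity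
  have hc1 : 1 < c := by simp [hc]; linarith
  have ht0 : 0 < t := lt_of_lt_of_le one_pos ht1
  have hct : 1 ≤ c * t := le_trans ht1 (le_mul_of_one_le_left (le_of_lt ht0) hc1.le)
  set S : Set ℝ := {s : ℝ | ∃ μ : Fin d → ℝ, Mx μ ≤ c * t - 1 ∧ s = My μ} with hSdef
  have hmem : My μstar ∈ S := ⟨μstar, by linarith [hu₁star ▸ htu], rfl⟩
  have hbdd : BddBelow S := ⟨0, by rintro s ⟨μ, _, rfl⟩; exact hMynn μ⟩
  have hXle : hX (c * t - 1) ≤ My μstar := by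
    rw [hhX]; exact csInf_le hbdd hmem
  have hXnn : 0 ≤ hX (c * t - 1) := by
    rw [hhX]; exact le_csInf ⟨_, hmem⟩ (by rintro s ⟨μ, _, rfl⟩; exact hMynn μ)
  have h2 : (N₂/2) * Real.log (1 + hX (c * t - 1)) ≤ (N₂/2) * Real.log (1 + My μstar) := by
    apply mul_le_mul_of_nonneg_left _ (by positivity)
    exact Real.log_le_log (by linarith) (by linarith)
  have h1 : Real.log (c * t) ≤ Real.log (1 + Mx μstar) + 2*ε/N₁ := by
    rw [Real.log_mul (by linarith) (ne_of_gt ht0)]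
    have hlt : Real.log t ≤ Real.log (1 + Mx μstar) :=
      Real.log_le_log ht0 (hu₁star ▸ htl)
    have hlc : Real.log c ≤ 2*ε/N₁ := by
      have := Real.log_le_sub_one_of_pos (x := c) (by linarith)
      simpa [hc] using this
    linarith
  have h1' : (N₁/2) * Real.log (c * t) ≤ (N₁/2) * Real.log (1 + Mx μstar) + ε := by
    have := mul_le_mul_of_nonneg_left h1 (le_of_lt (by positivity : (0:ℝ) < N₁/2))
    have heq : (N₁/2) * (2*ε/N₁) = ε := by field_simp
    nlinarith [this]
  rw [hF]
  simp only
  linarith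
end
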